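/- Let n ≥ k ≥ 2 be positive integers with k congruent to 2 or 3 modulo 4. Then the probability that a uniformly random graph G on the vertex set [n] (each of the C(n,2) possible edges present independently with probability 1/2) is a k-Ramsey graph equals (-1)^{C(n,k)} · P_{n,k}(1/2). Equivalently, the number of k-Ramsey graphs on [n] equals (-1)^{C(n,k)} · 2^{C(n,2)} · P_{n,k}(1/2). -/

import Mathlib

open Finset

/-- A graph is `k`-Ramsey if it has no clique of size `k` and no independent set of size `k`. -/
def IsRamseyGraph (k : ℕ) {V : Type*} (G : SimpleGraph V) : Prop :=
  (¬ ∃ s : Finset V, G.IsNClique k s) ∧ (¬ ∃ s : Finset V, Gᶜ.IsNClique k s)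

/-- The set of `k`-element subsets of `[n]`. -/
def ksubsets (n k : ℕ) : Finset (Finset (Fin n)) :=
  Finset.powersetCard k (Finset.univ : Finset (Fin n))

/-- The set `A` of assignments `g` associating to each `k`-element subset `S` of `[n]`
a graph on the vertex set `S` (given by its edge set, a set of `2`-element subsets of `S`)
which is neither complete nor empty.  An assignment is encoded as a function on all
finsets of `Fin n`, required to be `∅` off the `k`-element subsets. -/
def RamseyA (n k : ℕ) : Finset (Finset (Fin n) → Finset (Finset (Fin n))) :=
  Finset.univ.filter fun g =>
    (∀ S ∈ ksubsets n k,
      g S ⊆ Finset.powersetCard 2 S ∧ g S ≠ ∅ ∧ g S ≠ Finset.powersetCard 2 S) ∧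
    (∀ S, S ∉ ksubsets n k → g S = ∅)

/-- `Edges(g)`, the union of the edge sets of the graphs `g_S`. -/
def gEdges (n k : ℕ) (g : Finset (Fin n) → Finset (Finset (Fin n))) :
    Finset (Finset (Fin n)) :=
  (ksubsets n k).biUnion g

/-- The polynomial `P_{n,k}(t) = Σ_{g ∈ A} sign(g) t^{|Edges(g)|}`. -/
noncomputable def Pnk (n k : ℕ) : Polynomial ℤ :=
  ∑ g ∈ RamseyA n k,
    Polynomial.C (∏ S ∈ ksubsets n k, (-1 : ℤ) ^ (g S).card) *
      Polynomial.X ^ (gEdges n k g).card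

/-! ### Auxiliary definitions and lemmas -/

attribute [local instance] Classical.propDecidable

/-- All potential edges: the 2-element subsets of `Fin n`. -/
def AllE (n : ℕ) : Finset (Finset (Fin n)) := Finset.powersetCard 2 Finset.univ

/-- The edge-set condition corresponding to being a Ramsey graph. -/
def edgePred (n k : ℕ) (E : Finset (Finset (Fin n))) : Prop :=
  ∀ S ∈ ksubsets n k,
    E ∩ Finset.powersetCard 2 S ≠ ∅ ∧ E ∩ Finset.powersetCard 2 S ≠ Finset.powersetCard 2 S

lemma card_AllE (n : ℕ) : (AllE n).card = n.choose 2 := by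
  simp [AllE, Finset.card_powersetCard]

lemma supersets_card {α : Type*} [DecidableEq α] (A B : Finset α) (hAB : A ⊆ B) :
    ((B.powerset).filter (fun E => A ⊆ E)).card = 2 ^ (B.card - A.card) := by
  have h : ((B.powerset).filter (fun E => A ⊆ E)).card = ((B \ A).powerset).card := by
    apply Finset.card_nbij' (fun E => E \ A) (fun F => F ∪ A)
    · intro E hE
      simp only [mem_coe, mem_filter, mem_powerset] at hE ⊢
      exact sdiff_subset_sdiff hE.1 (Finset.Subset.refl A)
    · intro F hF
      simp only [mem_coe, mem_filter, mem_powerset, mem_powerset] at hF ⊢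
      constructor
      · exact union_subset (hF.trans sdiff_subset) hAB
      · exact subset_union_right
    · intro E hE
      simp only [mem_coe, mem_filter, mem_powerset] at hE
      exact sdiff_union_of_subset hE.2
    · intro F hF
      simp only [mem_coe, mem_powerset] at hF
      have h1 : F \ A = F := sdiff_eq_self_iff_disjoint.mpr
        (Finset.disjoint_right.mpr fun a haA haF => (Finset.mem_sdiff.mp (hF haF)).2 haA)
      beta_reduce
      rw [union_sdiff_distrib, sdiff_self, h1]
      simp
  rw [h, Finset.card_powerset, Finset.card_sdiff_of_subset hAB]

lemma choose_two_odd {k : ℕ} (hkmod : k % 4 = 2 ∨ k % 4 = 3) : Odd (k.choose 2) := by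
  rw [Nat.choose_two_right]
  obtain ⟨m, hm⟩ : ∃ m, k = 4 * m + 2 ∨ k = 4 * m + 3 := by
    rcases hkmod with h | h
    · exact ⟨k / 4, Or.inl (by omega)⟩
    · exact ⟨k / 4, Or.inr (by omega)⟩
  rcases hm with h | h
  · have : k * (k - 1) = 2 * ((2 * m + 1) * (4 * m + 1)) := by
      subst h
      have h2 : 4 * m + 2 - 1 = 4 * m + 1 := by omega
      rw [h2]; ring
    rw [this, Nat.mul_div_cancel_left _ (by norm_num)]
    exact Odd.mul ⟨m, by ring⟩ ⟨2 * m, by ring⟩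
  · have : k * (k - 1) = 2 * ((4 * m + 3) * (2 * m + 1)) := by
      subst h
      have h2 : 4 * m + 3 - 1 = 4 * m + 2 := by omega
      rw [h2]; ring
    rw [this, Nat.mul_div_cancel_left _ (by norm_num)]
    exact Odd.mul ⟨2 * m + 1, by ring⟩ ⟨m, by ring⟩

lemma sum_powerset_neg_one_real {α : Type*} [DecidableEq α] (x : Finset α) :
    (∑ m ∈ x.powerset, (-1 : ℝ) ^ m.card) = if x = ∅ then 1 else 0 := by
  have h := congrArg (Int.cast : ℤ → ℝ) (@Finset.sum_powerset_neg_one_pow_card α _ x)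
  push_cast at h
  rw [h]

/-- the inner per-S sum -/
lemma innerSumEval {α : Type*} [DecidableEq α] (F P : Finset α) (hFP : F ⊆ P)
    (hodd : Odd P.card) (hP : P ≠ ∅) :
    (∑ h ∈ (F.powerset).filter (fun h => h ≠ ∅ ∧ h ≠ P), (-1 : ℝ) ^ h.card)
      = if F ≠ ∅ ∧ F ≠ P then -1 else 0 := by
  have hsplit := Finset.sum_filter_add_sum_filter_not F.powerset
    (fun h => h ≠ ∅ ∧ h ≠ P) (fun h => (-1 : ℝ) ^ h.card)
  have htot := sum_powerset_neg_one_real F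
  by_cases hF0 : F = ∅
  · subst hF0
    rw [if_neg (by simp)]
    rw [Finset.powerset_empty, Finset.filter_singleton]
    simp
  · by_cases hFP' : F = P
    · subst hFP'
      have hfilt : (F.powerset).filter (fun h => ¬(h ≠ ∅ ∧ h ≠ F)) = {∅, F} := by
        ext h
        simp only [mem_filter, mem_powerset, mem_insert, mem_singleton, not_and, not_not, ne_eq]
        constructor
        · rintro ⟨hsub, hcond⟩
          by_cases h0 : h = ∅
          · exact Or.inl h0
          · exact Or.inr (hcond h0)
        · rintro (rfl | rfl) <;> simp
      have hne : (∅ : Finset α) ≠ F := fun h => hP h.symm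
      rw [hfilt, Finset.sum_pair hne] at hsplit
      rw [htot, if_neg hF0] at hsplit
      have : (-1 : ℝ) ^ F.card = -1 := hodd.neg_one_pow
      simp only [Finset.card_empty, pow_zero, this] at hsplit
      have : (∑ h ∈ (F.powerset).filter (fun h => h ≠ ∅ ∧ h ≠ F), (-1 : ℝ) ^ h.card) = 0 := by
        linarith
      rw [this, if_neg (by simp)]
    · have hfilt : (F.powerset).filter (fun h => ¬(h ≠ ∅ ∧ h ≠ P)) = {∅} := by
        ext h
        simp only [mem_filter, mem_powerset, mem_singleton, not_and, not_not, ne_eq]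
        constructor
        · rintro ⟨hsub, hcond⟩
          by_cases h0 : h = ∅
          · exact h0
          · exact absurd (hcond h0 ▸ hsub) (fun hPF => hFP' (Finset.Subset.antisymm hFP hPF))
        · rintro rfl; simp
      rw [hfilt, Finset.sum_singleton] at hsplit
      rw [htot, if_neg hF0] at hsplit
      simp only [Finset.card_empty, pow_zero] at hsplit
      rw [if_pos ⟨hF0, hFP'⟩]
      linarith

section Fact
variable (n k : ℕ) (E : Finset (Finset (Fin n)))

/-- per-S choice sets -/
noncomputable def tchoice (S : Finset (Fin n)) : Finset (Finset (Finset (Fin n))) :=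
  if S ∈ ksubsets n k then
    ((E ∩ Finset.powersetCard 2 S).powerset).filter
      (fun h => h ≠ ∅ ∧ h ≠ Finset.powersetCard 2 S)
  else {∅}

lemma filter_eq_piFinset :
    (RamseyA n k).filter (fun g => gEdges n k g ⊆ E) = Fintype.piFinset (tchoice n k E) := by
  ext g
  simp only [mem_filter, RamseyA, Finset.mem_univ, true_and, Fintype.mem_piFinset]
  constructor
  · rintro ⟨⟨h1, h2⟩, h3⟩ S
    unfold tchoice
    by_cases hS : S ∈ ksubsets n k
    · rw [if_pos hS]
      obtain ⟨hsub, hne, hnc⟩ := h1 S hS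
      have hgE : g S ⊆ E := fun e he => h3 (Finset.mem_biUnion.mpr ⟨S, hS, he⟩)
      exact Finset.mem_filter.mpr ⟨Finset.mem_powerset.mpr
        (Finset.subset_inter hgE hsub), hne, hnc⟩
    · rw [if_neg hS]
      simp [h2 S hS]
  · intro h
    refine ⟨⟨fun S hS => ?_, fun S hS => ?_⟩, ?_⟩
    · have := h S
      rw [tchoice, if_pos hS, Finset.mem_filter, Finset.mem_powerset] at this
      exact ⟨(this.1.trans Finset.inter_subset_right), this.2.1, this.2.2⟩
    · have := h S
      rw [tchoice, if_neg hS] at this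
      simpa using this
    · rw [gEdges]
      apply Finset.biUnion_subset.mpr
      intro S hS
      have := h S
      rw [tchoice, if_pos hS, Finset.mem_filter, Finset.mem_powerset] at this
      exact this.1.trans Finset.inter_subset_left

lemma myFactorization :
    (∑ g ∈ (RamseyA n k).filter (fun g => gEdges n k g ⊆ E),
      ∏ S ∈ ksubsets n k, (-1 : ℝ) ^ (g S).card)
    = ∏ S ∈ ksubsets n k,
        ∑ h ∈ ((E ∩ Finset.powersetCard 2 S).powerset).filter
          (fun h => h ≠ ∅ ∧ h ≠ Finset.powersetCard 2 S), (-1 : ℝ) ^ h.card := by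
  rw [filter_eq_piFinset]
  have key : ∀ g ∈ Fintype.piFinset (tchoice n k E),
      (∏ S ∈ ksubsets n k, (-1 : ℝ) ^ (g S).card)
        = ∏ S : Finset (Fin n), (-1 : ℝ) ^ (g S).card := by
    intro g hg
    rw [Fintype.mem_piFinset] at hg
    apply Finset.prod_subset (Finset.subset_univ _)
    intro S _ hS
    have := hg S
    rw [tchoice, if_neg hS, Finset.mem_singleton] at this
    simp [this]
  have hpu := Finset.prod_univ_sum (tchoice n k E)
    (fun (_ : Finset (Fin n)) (h : Finset (Finset (Fin n))) => (-1 : ℝ) ^ h.card)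
  rw [Finset.sum_congr rfl key, ← hpu]
  have h2 : (∏ S ∈ ksubsets n k, ∑ j ∈ tchoice n k E S, (-1 : ℝ) ^ j.card)
      = ∏ S : Finset (Fin n), ∑ j ∈ tchoice n k E S, (-1 : ℝ) ^ j.card := by
    refine Finset.prod_subset (Finset.subset_univ _) ?_
    intro S _ hS
    rw [tchoice, if_neg hS, Finset.sum_singleton]
    simp
  rw [← h2]
  refine Finset.prod_congr rfl fun S hS => ?_
  rw [tchoice, if_pos hS]
end Fact

section Graphs
variable {n k : ℕ}

lemma pair_mem_powersetCard_two {a b : Fin n} {S : Finset (Fin n)} :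
    ({a, b} : Finset (Fin n)) ∈ Finset.powersetCard 2 S ↔ a ≠ b ∧ a ∈ S ∧ b ∈ S := by
  rw [Finset.mem_powersetCard]
  constructor
  · rintro ⟨hsub, hcard⟩
    have hab : a ≠ b := by
      rintro rfl; simp at hcard
    exact ⟨hab, hsub (by simp), hsub (by simp)⟩
  · rintro ⟨hab, ha, hb⟩
    refine ⟨?_, Finset.card_pair hab⟩
    intro x hx
    rcases Finset.mem_insert.mp hx with rfl | hx
    · exact ha
    · exact (Finset.mem_singleton.mp hx) ▸ hb

lemma mem_powersetCard_two_iff {e S : Finset (Fin n)} :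
    e ∈ Finset.powersetCard 2 S ↔ ∃ a b, a ≠ b ∧ a ∈ S ∧ b ∈ S ∧ e = {a, b} := by
  constructor
  · intro he
    rw [Finset.mem_powersetCard] at he
    obtain ⟨a, b, hab, rfl⟩ := Finset.card_eq_two.mp he.2
    exact ⟨a, b, hab, he.1 (by simp), he.1 (by simp), rfl⟩
  · rintro ⟨a, b, hab, ha, hb, rfl⟩
    exact pair_mem_powersetCard_two.mpr ⟨hab, ha, hb⟩

noncomputable def Gr (E : Finset (Finset (Fin n))) : SimpleGraph (Fin n) :=
  SimpleGraph.fromRel (fun a b => ({a, b} : Finset (Fin n)) ∈ E)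

lemma Gr_adj (E : Finset (Finset (Fin n))) (a b : Fin n) :
    (Gr E).Adj a b ↔ a ≠ b ∧ ({a, b} : Finset (Fin n)) ∈ E := by
  rw [Gr, SimpleGraph.fromRel_adj]
  constructor
  · rintro ⟨hab, h | h⟩
    · exact ⟨hab, h⟩
    · exact ⟨hab, by rwa [Finset.pair_comm]⟩
  · rintro ⟨hab, h⟩
    exact ⟨hab, Or.inl h⟩

noncomputable def Ed (G : SimpleGraph (Fin n)) : Finset (Finset (Fin n)) :=
  (AllE n).filter (fun e => ∀ a ∈ e, ∀ b ∈ e, a ≠ b → G.Adj a b)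

lemma pair_mem_Ed {G : SimpleGraph (Fin n)} {a b : Fin n} :
    ({a, b} : Finset (Fin n)) ∈ Ed G ↔ G.Adj a b := by
  rw [Ed, Finset.mem_filter]
  constructor
  · rintro ⟨hAll, h⟩
    have hab : a ≠ b := by
      rw [AllE, Finset.mem_powersetCard] at hAll
      rintro rfl; simp at hAll
    exact h a (by simp) b (by simp) hab
  · intro hadj
    have hab := hadj.ne
    refine ⟨by rw [AllE]; exact pair_mem_powersetCard_two.mpr ⟨hab, by simp, by simp⟩, ?_⟩
    intro x hx y hy hxy
    rcases Finset.mem_insert.mp hx with rfl | hx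
    · rcases Finset.mem_insert.mp hy with rfl | hy
      · exact absurd rfl hxy
      · rw [Finset.mem_singleton.mp hy]; exact hadj
    · rw [Finset.mem_singleton.mp hx]
      rcases Finset.mem_insert.mp hy with rfl | hy
      · exact hadj.symm
      · rw [Finset.mem_singleton.mp hy] at hxy
        rw [Finset.mem_singleton.mp hx] at hxy
        exact absurd rfl hxy

lemma Gr_Ed (G : SimpleGraph (Fin n)) : Gr (Ed G) = G := by
  ext a b
  rw [Gr_adj, pair_mem_Ed]
  exact ⟨fun h => h.2, fun h => ⟨h.ne, h⟩⟩

lemma Ed_Gr (E : Finset (Finset (Fin n))) (hE : E ⊆ AllE n) : Ed (Gr E) = E := by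
  ext e
  constructor
  · intro he
    rw [Ed, Finset.mem_filter, AllE] at he
    obtain ⟨a, b, hab, _, _, rfl⟩ := mem_powersetCard_two_iff.mp he.1
    have := he.2 a (by simp) b (by simp) hab
    exact ((Gr_adj E a b).mp this).2
  · intro he
    have he' := hE he
    rw [AllE] at he'
    obtain ⟨a, b, hab, _, _, rfl⟩ := mem_powersetCard_two_iff.mp he'
    exact pair_mem_Ed.mpr ((Gr_adj E a b).mpr ⟨hab, he⟩)
end Graphs

section Ramsey
variable {n k : ℕ}

lemma mem_ksubsets {S : Finset (Fin n)} : S ∈ ksubsets n k ↔ S.card = k := by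
  rw [ksubsets, Finset.mem_powersetCard]
  simp

lemma inter_eq_P2_iff {E : Finset (Finset (Fin n))} {S : Finset (Fin n)} :
    E ∩ Finset.powersetCard 2 S = Finset.powersetCard 2 S ↔
      ∀ a ∈ S, ∀ b ∈ S, a ≠ b → ({a, b} : Finset (Fin n)) ∈ E := by
  rw [Finset.inter_eq_right]
  constructor
  · intro h a ha b hb hab
    exact h (pair_mem_powersetCard_two.mpr ⟨hab, ha, hb⟩)
  · intro h e he
    obtain ⟨a, b, hab, ha, hb, rfl⟩ := mem_powersetCard_two_iff.mp he
    exact h a ha b hb hab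

lemma inter_eq_empty_iff {E : Finset (Finset (Fin n))} {S : Finset (Fin n)} :
    E ∩ Finset.powersetCard 2 S = ∅ ↔
      ∀ a ∈ S, ∀ b ∈ S, a ≠ b → ({a, b} : Finset (Fin n)) ∉ E := by
  constructor
  · intro h a ha b hb hab hmem
    have : ({a, b} : Finset (Fin n)) ∈ E ∩ Finset.powersetCard 2 S :=
      Finset.mem_inter.mpr ⟨hmem, pair_mem_powersetCard_two.mpr ⟨hab, ha, hb⟩⟩
    simp [h] at this
  · intro h
    rw [Finset.eq_empty_iff_forall_notMem]
    intro e he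
    rw [Finset.mem_inter] at he
    obtain ⟨a, b, hab, ha, hb, rfl⟩ := mem_powersetCard_two_iff.mp he.2
    exact h a ha b hb hab he.1

lemma ramsey_iff_edgePred (E : Finset (Finset (Fin n))) (hE : E ⊆ AllE n) (hkn : k ≤ n) :
    IsRamseyGraph k (Gr E) ↔ edgePred n k E := by
  constructor
  · rintro ⟨hcl, hind⟩ S hS
    rw [mem_ksubsets] at hS
    constructor
    · intro h0
      exact hind ⟨S, by
        constructor
        · intro a ha b hb hab
          rw [SimpleGraph.compl_adj]
          refine ⟨hab, ?_⟩
          rw [Gr_adj]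
          rintro ⟨-, hmem⟩
          exact inter_eq_empty_iff.mp h0 a ha b hb hab hmem
        · exact hS⟩
    · intro hfull
      exact hcl ⟨S, by
        constructor
        · intro a ha b hb hab
          rw [Gr_adj]
          exact ⟨hab, inter_eq_P2_iff.mp hfull a ha b hb hab⟩
        · exact hS⟩
  · intro hEP
    constructor
    · rintro ⟨S, hclique, hcard⟩
      obtain ⟨h1, h2⟩ := hEP S (mem_ksubsets.mpr hcard)
      apply h2
      rw [inter_eq_P2_iff]
      intro a ha b hb hab
      exact ((Gr_adj E a b).mp (hclique ha hb hab)).2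
    · rintro ⟨S, hclique, hcard⟩
      obtain ⟨h1, h2⟩ := hEP S (mem_ksubsets.mpr hcard)
      apply h1
      rw [inter_eq_empty_iff]
      intro a ha b hb hab hmem
      have := hclique ha hb hab
      rw [SimpleGraph.compl_adj] at this
      exact this.2 ((Gr_adj E a b).mpr ⟨hab, hmem⟩)

lemma card_ramsey_eq (hkn : k ≤ n) :
    (Finset.univ.filter (fun G : SimpleGraph (Fin n) => IsRamseyGraph k G)).card
      = (((AllE n).powerset).filter (edgePred n k)).card := by
  apply Finset.card_nbij' Ed Gr
  · intro G hG
    rw [Finset.mem_coe, Finset.mem_filter] at hG ⊢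
    refine ⟨Finset.mem_powerset.mpr (Finset.filter_subset _ _), ?_⟩
    rw [← ramsey_iff_edgePred (Ed G) (Finset.filter_subset _ _) hkn, Gr_Ed]
    exact hG.2
  · intro E hE
    rw [Finset.mem_coe, Finset.mem_filter, Finset.mem_powerset] at hE
    rw [Finset.mem_coe, Finset.mem_filter]
    exact ⟨Finset.mem_univ _, (ramsey_iff_edgePred E hE.1 hkn).mpr hE.2⟩
  · intro G _
    exact Gr_Ed G
  · intro E hE
    rw [Finset.mem_coe, Finset.mem_filter, Finset.mem_powerset] at hE
    exact Ed_Gr E hE.1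

lemma nat_card_ramsey (hkn : k ≤ n) :
    Nat.card {G : SimpleGraph (Fin n) // IsRamseyGraph k G}
      = (((AllE n).powerset).filter (edgePred n k)).card := by
  rw [Nat.card_eq_fintype_card, Fintype.card_subtype, card_ramsey_eq hkn]
end Ramsey

lemma gEdges_subset_AllE {n k : ℕ} {g : Finset (Fin n) → Finset (Finset (Fin n))}
    (hg : g ∈ RamseyA n k) : gEdges n k g ⊆ AllE n := by
  rw [RamseyA, Finset.mem_filter] at hg
  rw [gEdges]
  apply Finset.biUnion_subset.mpr
  intro S hS
  refine (hg.2.1 S hS).1.trans ?_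
  rw [AllE]
  exact Finset.powersetCard_mono (Finset.subset_univ S)

lemma main_identity (n k : ℕ) (hk : 2 ≤ k) (hkn : k ≤ n)
    (hkmod : k % 4 = 2 ∨ k % 4 = 3) :
    (2 : ℝ) ^ (n.choose 2) * Polynomial.aeval ((1 : ℝ) / 2) (Pnk n k)
      = (-1 : ℝ) ^ (n.choose k) * ((((AllE n).powerset).filter (edgePred n k)).card : ℝ) := by
  have hAeval : Polynomial.aeval ((1 : ℝ) / 2) (Pnk n k)
      = ∑ g ∈ RamseyA n k, (∏ S ∈ ksubsets n k, (-1 : ℝ) ^ (g S).card)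
          * ((1 : ℝ) / 2) ^ (gEdges n k g).card := by
    rw [Pnk, map_sum]
    refine Finset.sum_congr rfl fun g _ => ?_
    rw [map_mul, map_pow, Polynomial.aeval_X, Polynomial.aeval_C]
    push_cast
    ring
  rw [hAeval, Finset.mul_sum]
  have step1 : ∀ g ∈ RamseyA n k,
      (2 : ℝ) ^ (n.choose 2) * ((∏ S ∈ ksubsets n k, (-1 : ℝ) ^ (g S).card)
        * ((1 : ℝ) / 2) ^ (gEdges n k g).card)
      = ∑ E ∈ (AllE n).powerset,
          (if gEdges n k g ⊆ E then (∏ S ∈ ksubsets n k, (-1 : ℝ) ^ (g S).card) else 0) := by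
    intro g hg
    have hsub := gEdges_subset_AllE hg
    have hc : (gEdges n k g).card ≤ n.choose 2 :=
      (Finset.card_le_card hsub).trans_eq (card_AllE n)
    have hpow : (2 : ℝ) ^ (n.choose 2) * ((1 : ℝ) / 2) ^ (gEdges n k g).card
        = 2 ^ (n.choose 2 - (gEdges n k g).card) := by
      rw [pow_sub₀ (2 : ℝ) two_ne_zero hc, one_div, inv_pow]
    have hcount := supersets_card (gEdges n k g) (AllE n) hsub
    rw [card_AllE] at hcount
    rw [← Finset.sum_filter, Finset.sum_const, hcount, nsmul_eq_mul]
    push_cast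
    rw [← hpow]
    ring
  rw [Finset.sum_congr rfl step1, Finset.sum_comm]
  have step2 : ∀ E ∈ (AllE n).powerset,
      (∑ g ∈ RamseyA n k,
        if gEdges n k g ⊆ E then (∏ S ∈ ksubsets n k, (-1 : ℝ) ^ (g S).card) else 0)
      = if edgePred n k E then (-1 : ℝ) ^ (n.choose k) else 0 := by
    intro E _
    rw [← Finset.sum_filter, myFactorization]
    have hprod : ∀ S ∈ ksubsets n k,
        (∑ h ∈ ((E ∩ Finset.powersetCard 2 S).powerset).filter
          (fun h => h ≠ ∅ ∧ h ≠ Finset.powersetCard 2 S), (-1 : ℝ) ^ h.card)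
        = if (E ∩ Finset.powersetCard 2 S ≠ ∅ ∧
              E ∩ Finset.powersetCard 2 S ≠ Finset.powersetCard 2 S) then -1 else 0 := by
      intro S hS
      have hcardS : S.card = k := mem_ksubsets.mp hS
      have hodd : Odd ((Finset.powersetCard 2 S).card) := by
        rw [Finset.card_powersetCard, hcardS]
        exact choose_two_odd hkmod
      have hPne : Finset.powersetCard 2 S ≠ ∅ := by
        rw [← Finset.nonempty_iff_ne_empty, Finset.powersetCard_nonempty]
        omega
      exact innerSumEval _ _ Finset.inter_subset_right hodd hPne
    rw [Finset.prod_congr rfl hprod]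
    by_cases hEP : edgePred n k E
    · rw [if_pos hEP]
      have : ∀ S ∈ ksubsets n k,
          (if (E ∩ Finset.powersetCard 2 S ≠ ∅ ∧
              E ∩ Finset.powersetCard 2 S ≠ Finset.powersetCard 2 S) then (-1 : ℝ) else 0)
            = -1 := fun S hS => if_pos (hEP S hS)
      rw [Finset.prod_congr rfl this, Finset.prod_const]
      congr 1
      rw [ksubsets, Finset.card_powersetCard]
      simp
    · rw [if_neg hEP]
      rw [edgePred] at hEP
      push_neg at hEP
      obtain ⟨S, hS, hbad⟩ := hEP
      apply Finset.prod_eq_zero hS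
      rw [if_neg]
      intro hcond
      exact hcond.2 (hbad (Finset.nonempty_iff_ne_empty.mpr hcond.1))
  rw [Finset.sum_congr rfl step2, ← Finset.sum_filter, Finset.sum_const]
  push_cast
  ring

theorem stmt_7 (n k : ℕ) (hk : 2 ≤ k) (hkn : k ≤ n)
    (hkmod : k % 4 = 2 ∨ k % 4 = 3) :
    (Nat.card {G : SimpleGraph (Fin n) // IsRamseyGraph k G} : ℝ) / 2 ^ (n.choose 2) =
        (-1 : ℝ) ^ (n.choose k) * Polynomial.aeval ((1 : ℝ) / 2) (Pnk n k) ∧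
      (Nat.card {G : SimpleGraph (Fin n) // IsRamseyGraph k G} : ℝ) =
        (-1 : ℝ) ^ (n.choose k) * 2 ^ (n.choose 2) *
          Polynomial.aeval ((1 : ℝ) / 2) (Pnk n k) := by
  have hN := nat_card_ramsey (n := n) (k := k) hkn
  have hmain := main_identity n k hk hkn hkmod
  rw [← hN] at hmain
  have hsq : (-1 : ℝ) ^ (n.choose k) * (-1 : ℝ) ^ (n.choose k) = 1 := by
    rw [← pow_add]
    exact Even.neg_one_pow ⟨n.choose k, rfl⟩
  have h2 : (Nat.card {G : SimpleGraph (Fin n) // IsRamseyGraph k G} : ℝ) =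
      (-1 : ℝ) ^ (n.choose k) * 2 ^ (n.choose 2) *
        Polynomial.aeval ((1 : ℝ) / 2) (Pnk n k) := by
    have := congrArg (fun x => (-1 : ℝ) ^ (n.choose k) * x) hmain
    rw [← mul_assoc, ← mul_assoc, hsq, one_mul] at this
    linarith [this]
  refine ⟨?_, h2⟩
  rw [div_eq_iff (by positivity : (2 : ℝ) ^ (n.choose 2) ≠ 0), h2]
  ring
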